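/- For integers d ≥ 1, r ≥ 0, n ≥ 0, m ≥ 0, the following binomial identity holds: C(d−1−r, n−m)·C(r−1, m) + C(d−1−r, n−m−1)·C(r−2, m) − C(d−1−r, n−m)·C(r−2, m−1) = C(d−r, n−m)·C(r−2, m). -/

import Mathlib

open scoped Classical

/-- The generalized binomial coefficient `C(x, k)` for `x : ℚ` and `k : ℤ`:
`x(x-1)⋯(x-k+1)/k!` when `k ≥ 0`, and `0` when `k < 0`. -/
noncomputable def gchoose (x : ℚ) (k : ℤ) : ℚ :=
  if 0 ≤ k then (∏ j ∈ Finset.range k.toNat, (x - j)) / (Nat.factorial k.toNat) else 0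

lemma gchoose_pascal (x : ℚ) (k : ℤ) :
    gchoose (x + 1) k = gchoose x k + gchoose x (k - 1) := by
  rcases lt_trichotomy k 0 with h | h | h
  · simp [gchoose, not_le.mpr h, not_le.mpr (by omega : k - 1 < 0)]
    exact fun h' => absurd h' (by omega)
  · subst h
    simp [gchoose]
  · obtain ⟨t, rfl⟩ : ∃ t : ℕ, k = (t : ℤ) + 1 := ⟨(k - 1).toNat, by omega⟩
    have h0 : ((t : ℤ) + 1).toNat = t + 1 := by omega
    have h1 : ((t : ℤ) + 1 - 1).toNat = t := by omega
    simp only [gchoose, if_pos (by omega : (0:ℤ) ≤ (t:ℤ) + 1),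
      if_pos (by omega : (0:ℤ) ≤ (t:ℤ) + 1 - 1), h0, h1]
    rw [Finset.prod_range_succ' (fun j => x + 1 - (j : ℚ)), Finset.prod_range_succ]
    have hfac : (Nat.factorial (t + 1) : ℚ) ≠ 0 := by positivity
    have hfac' : (Nat.factorial t : ℚ) ≠ 0 := by positivity
    have hprod : (∏ j ∈ Finset.range t, (x + 1 - ((j : ℚ) + 1)))
        = ∏ j ∈ Finset.range t, (x - (j : ℚ)) := by
      apply Finset.prod_congr rfl
      intro j _
      ring
    push_cast at hprod ⊢
    rw [hprod, Nat.factorial_succ]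
    push_cast
    field_simp
    ring

theorem binomial_identity (d r : ℤ) (n m : ℕ) (hd : 1 ≤ d) (hr : 0 ≤ r) :
    gchoose ((d : ℚ) - 1 - r) ((n : ℤ) - m) * gchoose ((r : ℚ) - 1) (m : ℤ)
      + gchoose ((d : ℚ) - 1 - r) ((n : ℤ) - m - 1) * gchoose ((r : ℚ) - 2) (m : ℤ)
      - gchoose ((d : ℚ) - 1 - r) ((n : ℤ) - m) * gchoose ((r : ℚ) - 2) ((m : ℤ) - 1)
    = gchoose ((d : ℚ) - r) ((n : ℤ) - m) * gchoose ((r : ℚ) - 2) (m : ℤ) := by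
  have e1 : (d : ℚ) - r = ((d : ℚ) - 1 - r) + 1 := by ring
  have e2 : (r : ℚ) - 1 = ((r : ℚ) - 2) + 1 := by ring
  rw [e1, e2, gchoose_pascal, gchoose_pascal]
  ring
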